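/- In the tandem system with finite buffers (either manufacturing or communication blocking), departure times are monotone nondecreasing functions of buffer capacities: if B_n ≤ B'_n for all n, then every departure time computed with capacities B' is less than or equal to the one computed with capacities B. Equivalently, enlarging buffers can only decrease (weakly) the departure times. -/

import Mathlib

/-- Tandem system with finite buffers `B` under communication blocking
(terms with nonpositive index are taken to be `0`, which is the value of all
departure times at index `0`). -/
def CommBlock (N : ℕ) (A : ℕ → ℝ) (τ : ℕ → ℕ → ℝ) (B : ℕ → ℕ)
    (D : ℕ → ℕ → ℝ) : Prop :=
  (∀ n, D 0 n = 0) ∧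
  (∀ k, D (k + 1) 1 =
    max (max (A (k + 1)) (D k 1)) (D (k + 1 - (B 2 + 1)) 2) + τ (k + 1) 1) ∧
  (∀ k n, 2 ≤ n → n ≤ N - 1 → D (k + 1) n =
    max (max (D (k + 1) (n - 1)) (D k n)) (D (k + 1 - (B (n + 1) + 1)) (n + 1))
      + τ (k + 1) n) ∧
  (∀ k, D (k + 1) N = max (D (k + 1) (N - 1)) (D k N) + τ (k + 1) N)

/-- Tandem system with finite buffers `B` under manufacturing blocking. -/
def MfgBlock (N : ℕ) (A : ℕ → ℝ) (τ : ℕ → ℕ → ℝ) (B : ℕ → ℕ)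
    (D : ℕ → ℕ → ℝ) : Prop :=
  (∀ n, D 0 n = 0) ∧
  (∀ k, D (k + 1) 1 =
    max (max (A (k + 1)) (D k 1) + τ (k + 1) 1) (D (k + 1 - (B 2 + 1)) 2)) ∧
  (∀ k n, 2 ≤ n → n ≤ N - 1 → D (k + 1) n =
    max (max (D (k + 1) (n - 1)) (D k n) + τ (k + 1) n)
      (D (k + 1 - (B (n + 1) + 1)) (n + 1))) ∧
  (∀ k, D (k + 1) N = max (D (k + 1) (N - 1)) (D k N) + τ (k + 1) N)

lemma comm_mono_k (N : ℕ) (hN : 2 ≤ N) (A : ℕ → ℝ) (τ : ℕ → ℕ → ℝ)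
    (B : ℕ → ℕ) (hτ : ∀ k n, 0 ≤ τ k n) (D : ℕ → ℕ → ℝ)
    (hD : CommBlock N A τ B D) :
    ∀ n, 1 ≤ n → n ≤ N → ∀ j k, j ≤ k → D j n ≤ D k n := by
  obtain ⟨h0, h1, hmid, hNc⟩ := hD
  intro n hn1 hnN
  have step : ∀ k, D k n ≤ D (k + 1) n := by
    intro k
    rcases eq_or_ne n 1 with rfl | hne1
    · rw [h1 k]
      exact le_trans (le_max_of_le_left (le_max_right _ _))
        (le_add_of_nonneg_right (hτ _ _))
    · rcases eq_or_ne n N with rfl | hneN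
      · rw [hNc k]
        exact le_trans (le_max_right _ _) (le_add_of_nonneg_right (hτ _ _))
      · rw [hmid k n (by omega) (by omega)]
        exact le_trans (le_max_of_le_left (le_max_right _ _))
          (le_add_of_nonneg_right (hτ _ _))
  exact fun j k hjk => monotone_nat_of_le_succ step hjk

lemma mfg_mono_k (N : ℕ) (hN : 2 ≤ N) (A : ℕ → ℝ) (τ : ℕ → ℕ → ℝ)
    (B : ℕ → ℕ) (hτ : ∀ k n, 0 ≤ τ k n) (D : ℕ → ℕ → ℝ)
    (hD : MfgBlock N A τ B D) :
    ∀ n, 1 ≤ n → n ≤ N → ∀ j k, j ≤ k → D j n ≤ D k n := by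
  obtain ⟨h0, h1, hmid, hNc⟩ := hD
  intro n hn1 hnN
  have step : ∀ k, D k n ≤ D (k + 1) n := by
    intro k
    rcases eq_or_ne n 1 with rfl | hne1
    · rw [h1 k]
      exact le_max_of_le_left
        (le_trans (le_max_right _ _) (le_add_of_nonneg_right (hτ _ _)))
    · rcases eq_or_ne n N with rfl | hneN
      · rw [hNc k]
        exact le_trans (le_max_right _ _) (le_add_of_nonneg_right (hτ _ _))
      · rw [hmid k n (by omega) (by omega)]
        exact le_max_of_le_left
          (le_trans (le_max_right _ _) (le_add_of_nonneg_right (hτ _ _)))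
  exact fun j k hjk => monotone_nat_of_le_succ step hjk

lemma comm_compare (N : ℕ) (hN : 2 ≤ N) (A : ℕ → ℝ) (τ : ℕ → ℕ → ℝ)
    (B B' : ℕ → ℕ) (hB : ∀ n, B n ≤ B' n) (hτ : ∀ k n, 0 ≤ τ k n)
    (D D' : ℕ → ℕ → ℝ) (hD : CommBlock N A τ B D)
    (hD' : CommBlock N A τ B' D') :
    ∀ k n, 1 ≤ n → n ≤ N → D' k n ≤ D k n := by
  have mono := comm_mono_k N hN A τ B hτ D hD
  obtain ⟨h0, h1, hmid, hNc⟩ := hD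
  obtain ⟨h0', h1', hmid', hNc'⟩ := hD'
  intro k
  induction k using Nat.strong_induction_on with
  | _ k ih =>
    rcases k with _ | k
    · intro n _ _; rw [h0 n, h0' n]
    · intro n
      induction n with
      | zero => omega
      | succ n ihn =>
        intro hn1 hnN
        -- buffer term bound, generic
        have hbuf : ∀ m, 1 ≤ m → m ≤ N →
            D' (k + 1 - (B' m + 1)) m ≤ D (k + 1 - (B m + 1)) m := by
          intro m hm1 hmN
          refine le_trans (ih _ (by omega) m hm1 hmN) ?_
          exact mono m hm1 hmN _ _ (Nat.sub_le_sub_left (by have := hB m; omega) _)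
        rcases eq_or_ne (n + 1) 1 with he1 | hne1
        · have hn0 : n = 0 := by omega
          subst hn0
          rw [h1 k, h1' k]
          refine add_le_add_left (max_le_max (max_le_max le_rfl ?_) ?_) _
          · exact ih k (by omega) 1 le_rfl (by omega)
          · exact hbuf 2 (by omega) hN
        · rcases eq_or_ne (n + 1) N with heN | hneN
          · rw [← heN] at hNc hNc'
            rw [hNc k, hNc' k]
            have h1' : D' (k + 1) (n + 1 - 1) ≤ D (k + 1) (n + 1 - 1) := by
              simpa using ihn (by omega) (by omega)
            exact add_le_add_left
              (max_le_max h1' (ih k (by omega) (n + 1) hn1 hnN)) _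
          · have hr1 : 2 ≤ n + 1 := by omega
            have hr2 : n + 1 ≤ N - 1 := by omega
            rw [hmid k (n + 1) hr1 hr2, hmid' k (n + 1) hr1 hr2]
            refine add_le_add_left (max_le_max (max_le_max ?_ ?_) ?_) _
            · simpa using ihn (by omega) (by omega)
            · exact ih k (by omega) (n + 1) hn1 hnN
            · exact hbuf (n + 2) (by omega) (by omega)

lemma mfg_compare (N : ℕ) (hN : 2 ≤ N) (A : ℕ → ℝ) (τ : ℕ → ℕ → ℝ)
    (B B' : ℕ → ℕ) (hB : ∀ n, B n ≤ B' n) (hτ : ∀ k n, 0 ≤ τ k n)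
    (D D' : ℕ → ℕ → ℝ) (hD : MfgBlock N A τ B D)
    (hD' : MfgBlock N A τ B' D') :
    ∀ k n, 1 ≤ n → n ≤ N → D' k n ≤ D k n := by
  have mono := mfg_mono_k N hN A τ B hτ D hD
  obtain ⟨h0, h1, hmid, hNc⟩ := hD
  obtain ⟨h0', h1', hmid', hNc'⟩ := hD'
  intro k
  induction k using Nat.strong_induction_on with
  | _ k ih =>
    rcases k with _ | k
    · intro n _ _; rw [h0 n, h0' n]
    · intro n
      induction n with
      | zero => omega
      | succ n ihn =>
        intro hn1 hnN
        have hbuf : ∀ m, 1 ≤ m → m ≤ N →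
            D' (k + 1 - (B' m + 1)) m ≤ D (k + 1 - (B m + 1)) m := by
          intro m hm1 hmN
          refine le_trans (ih _ (by omega) m hm1 hmN) ?_
          exact mono m hm1 hmN _ _ (Nat.sub_le_sub_left (by have := hB m; omega) _)
        rcases eq_or_ne (n + 1) 1 with he1 | hne1
        · have hn0 : n = 0 := by omega
          subst hn0
          rw [h1 k, h1' k]
          refine max_le_max (add_le_add_left (max_le_max le_rfl ?_) _) ?_
          · exact ih k (by omega) 1 le_rfl (by omega)
          · exact hbuf 2 (by omega) hN
        · rcases eq_or_ne (n + 1) N with heN | hneN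
          · rw [← heN] at hNc hNc'
            rw [hNc k, hNc' k]
            have hp : D' (k + 1) (n + 1 - 1) ≤ D (k + 1) (n + 1 - 1) := by
              simpa using ihn (by omega) (by omega)
            exact add_le_add_left
              (max_le_max hp (ih k (by omega) (n + 1) hn1 hnN)) _
          · have hr1 : 2 ≤ n + 1 := by omega
            have hr2 : n + 1 ≤ N - 1 := by omega
            rw [hmid k (n + 1) hr1 hr2, hmid' k (n + 1) hr1 hr2]
            refine max_le_max (add_le_add_left (max_le_max ?_ ?_) _) ?_
            · simpa using ihn (by omega) (by omega)
            · exact ih k (by omega) (n + 1) hn1 hnN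
            · exact hbuf (n + 2) (by omega) (by omega)

/-- Enlarging the buffers (componentwise `B ≤ B'`) can only decrease (weakly)
all departure times, under either communication or manufacturing blocking. -/
theorem stmt_12 (N : ℕ) (hN : 2 ≤ N) (A : ℕ → ℝ) (τ : ℕ → ℕ → ℝ)
    (B B' : ℕ → ℕ) (hB : ∀ n, B n ≤ B' n)
    (hAmono : Monotone A) (hA0 : ∀ k, 0 ≤ A k) (hτ : ∀ k n, 0 ≤ τ k n)
    (Dc Dc' Dm Dm' : ℕ → ℕ → ℝ)
    (hDc : CommBlock N A τ B Dc) (hDc' : CommBlock N A τ B' Dc')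
    (hDm : MfgBlock N A τ B Dm) (hDm' : MfgBlock N A τ B' Dm') :
    (∀ k n, 1 ≤ n → n ≤ N → Dc' k n ≤ Dc k n) ∧
    (∀ k n, 1 ≤ n → n ≤ N → Dm' k n ≤ Dm k n) := by
  exact ⟨comm_compare N hN A τ B B' hB hτ Dc Dc' hDc hDc',
         mfg_compare N hN A τ B B' hB hτ Dm Dm' hDm hDm'⟩
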